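/- (Ratio Consensus, Proposition 1.) Let G = (N, E) be a strongly connected directed graph on n nodes and define the n×n matrix P by P_{lj} = 1/(1 + d_j^+) if l = j or (v_l, v_j) ∈ E, and P_{lj} = 0 otherwise. Let S ∈ ℝ^n, and define sequences y[k], x[k] ∈ ℝ^n by y[0] = S, x[0] = 𝟏 (the all-ones vector), y[k+1] = P y[k], x[k+1] = P x[k]. Then for every k, x_j[k] > 0 for all j, and for every node v_j the ratio μ_j[k] = y_j[k]/x_j[k] converges, as k → ∞, to (Σ_{i=1}^n S_i)/n, the average of the initial values. -/

import Mathlib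

open Filter Matrix Finset

lemma inf'_le_sup'_univ {n : ℕ} (hne : (Finset.univ : Finset (Fin n)).Nonempty)
    (f : Fin n → ℝ) : Finset.univ.inf' hne f ≤ Finset.univ.sup' hne f := by
  obtain ⟨i, hi⟩ := hne
  exact (Finset.inf'_le _ hi).trans (Finset.le_sup' _ hi)

/-- Powers of an entrywise-nonnegative matrix are entrywise nonnegative. -/
lemma pow_entry_nonneg {n : ℕ} (Q : Matrix (Fin n) (Fin n) ℝ)
    (hnn : ∀ i j, 0 ≤ Q i j) : ∀ k i j, 0 ≤ (Q ^ k) i j := by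
  intro k
  induction k with
  | zero => intro i j; simp [Matrix.one_apply]; split <;> norm_num
  | succ k ih =>
      intro i j
      rw [pow_succ, Matrix.mul_apply]
      exact Finset.sum_nonneg fun l _ => mul_nonneg (ih i l) (hnn l j)

/-- Positive entries of powers persist (positive diagonal). -/
lemma pow_entry_pos_mono {n : ℕ} (Q : Matrix (Fin n) (Fin n) ℝ)
    (hnn : ∀ i j, 0 ≤ Q i j) (hdiag : ∀ i, 0 < Q i i) :
    ∀ k m, k ≤ m → ∀ i j, 0 < (Q ^ k) i j → 0 < (Q ^ m) i j := by
  intro k m hkm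
  induction m, hkm using Nat.le_induction with
  | base => exact fun i j h => h
  | succ m hm ih =>
      intro i j h
      rw [pow_succ', Matrix.mul_apply]
      refine Finset.sum_pos' (fun l _ => mul_nonneg (hnn i l) (pow_entry_nonneg Q hnn m l j)) ⟨i, Finset.mem_univ i, ?_⟩
      exact mul_pos (hdiag i) (ih i j h)

/-- Row sums of powers of a row-stochastic matrix are 1. -/
lemma pow_row_sum {n : ℕ} (Q : Matrix (Fin n) (Fin n) ℝ)
    (hrow : ∀ i, ∑ j, Q i j = 1) : ∀ k i, ∑ j, (Q ^ k) i j = 1 := by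
  intro k
  induction k with
  | zero => intro i; simp [Matrix.one_apply]
  | succ k ih =>
      intro i
      have : ∑ j, (Q ^ (k+1)) i j = ∑ l, (Q ^ k) i l * ∑ j, Q l j := by
        simp only [pow_succ, Matrix.mul_apply, Finset.mul_sum]
        rw [Finset.sum_comm]
      rw [this]
      simp only [hrow, mul_one, ih i]

/-- Row-stochastic nonneg matrix maps vectors within [inf, sup]. -/
lemma mulVec_bounds {n : ℕ} (hne : (Finset.univ : Finset (Fin n)).Nonempty)
    (A : Matrix (Fin n) (Fin n) ℝ)
    (hnn : ∀ i j, 0 ≤ A i j) (hrow : ∀ i, ∑ j, A i j = 1) (w : Fin n → ℝ) (i : Fin n) :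
    Finset.univ.inf' hne w ≤ (A *ᵥ w) i ∧ (A *ᵥ w) i ≤ Finset.univ.sup' hne w := by
  constructor
  · calc Finset.univ.inf' hne w = ∑ j, A i j * Finset.univ.inf' hne w := by
          rw [← Finset.sum_mul, hrow, one_mul]
    _ ≤ ∑ j, A i j * w j :=
          Finset.sum_le_sum fun j _ => mul_le_mul_of_nonneg_left
            (Finset.inf'_le _ (Finset.mem_univ j)) (hnn i j)
    _ = (A *ᵥ w) i := rfl
  · calc (A *ᵥ w) i = ∑ j, A i j * w j := rfl
    _ ≤ ∑ j, A i j * Finset.univ.sup' hne w :=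
          Finset.sum_le_sum fun j _ => mul_le_mul_of_nonneg_left
            (Finset.le_sup' _ (Finset.mem_univ j)) (hnn i j)
    _ = Finset.univ.sup' hne w := by rw [← Finset.sum_mul, hrow, one_mul]

/-- Contraction estimate for an entrywise ≥ ε row-stochastic matrix. -/
lemma mulVec_contract {n : ℕ} (hne : (Finset.univ : Finset (Fin n)).Nonempty)
    (A : Matrix (Fin n) (Fin n) ℝ) (ε : ℝ)
    (hnn : ∀ i j, 0 ≤ A i j) (hrow : ∀ i, ∑ j, A i j = 1)
    (hε : ∀ i j, ε ≤ A i j) (w : Fin n → ℝ) (i : Fin n) :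
    (A *ᵥ w) i ≤ Finset.univ.inf' hne w
      + (1 - ε) * (Finset.univ.sup' hne w - Finset.univ.inf' hne w) := by
  obtain ⟨j0, _, hj0⟩ := Finset.exists_mem_eq_inf' hne w
  set m := Finset.univ.inf' hne w with hm
  set M := Finset.univ.sup' hne w with hM
  have hMm : 0 ≤ M - m := sub_nonneg.2 (inf'_le_sup'_univ hne w)
  have key : (A *ᵥ w) i = (∑ j, A i j * (w j - m)) + m := by
    simp only [Matrix.mulVec, dotProduct, mul_sub, Finset.sum_sub_distrib,
      ← Finset.sum_mul, hrow, one_mul]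
    ring
  rw [key]
  have hsplit : ∑ j, A i j * (w j - m) = ∑ j ∈ Finset.univ.erase j0, A i j * (w j - m) := by
    rw [← Finset.sum_erase_add _ _ (Finset.mem_univ j0)]
    simp [← hj0]
  have hb : ∑ j ∈ Finset.univ.erase j0, A i j * (w j - m)
      ≤ ∑ j ∈ Finset.univ.erase j0, A i j * (M - m) := by
    refine Finset.sum_le_sum fun j _ => mul_le_mul_of_nonneg_left ?_ (hnn i j)
    exact sub_le_sub_right (Finset.le_sup' _ (Finset.mem_univ j)) m
  have herase : ∑ j ∈ Finset.univ.erase j0, A i j = 1 - A i j0 := by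
    have := Finset.sum_erase_add Finset.univ (A i) (Finset.mem_univ j0)
    rw [hrow] at this
    linarith
  have hle : ∑ j ∈ Finset.univ.erase j0, A i j * (M - m) ≤ (1 - ε) * (M - m) := by
    rw [← Finset.sum_mul, herase]
    exact mul_le_mul_of_nonneg_right (by linarith [hε i j0]) hMm
  linarith [hsplit ▸ (hb.trans hle)]

/-- Key convergence lemma: columns of powers of a primitive row-stochastic matrix
converge to a positive limit. -/
lemma key_conv {n : ℕ} (hn : 0 < n) (Q : Matrix (Fin n) (Fin n) ℝ)
    (hnn : ∀ i j, 0 ≤ Q i j) (hrow : ∀ i, ∑ j, Q i j = 1)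
    (hdiag : ∀ i, 0 < Q i i)
    (hconn : ∀ i j : Fin n, ∃ k, 0 < (Q ^ k) i j) :
    ∀ j : Fin n, ∃ L : ℝ, 0 < L ∧
      ∀ i, Tendsto (fun k => (Q ^ k) i j) atTop (nhds L) := by
  have : Nonempty (Fin n) := ⟨⟨0, hn⟩⟩
  have hne : (Finset.univ : Finset (Fin n)).Nonempty := Finset.univ_nonempty
  -- a uniformly positive power
  set f : Fin n × Fin n → ℕ := fun p => (hconn p.1 p.2).choose with hf
  set K : ℕ := Finset.univ.sup f + 1 with hKdef
  have hKpos : 0 < K := Nat.succ_pos _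
  have hK : ∀ i j, 0 < (Q ^ K) i j := by
    intro i j
    refine pow_entry_pos_mono Q hnn hdiag (f (i, j)) K ?_ i j (hconn i j).choose_spec
    exact le_trans (Finset.le_sup (Finset.mem_univ (i, j))) (Nat.le_succ _)
  have hQKnn := pow_entry_nonneg Q hnn K
  have hQKrow := pow_row_sum Q hrow K
  have hnep : (Finset.univ : Finset (Fin n × Fin n)).Nonempty := Finset.univ_nonempty
  set ε : ℝ := Finset.univ.inf' hnep (fun p : Fin n × Fin n => (Q ^ K) p.1 p.2) with hεdef
  have hεpos : 0 < ε := by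
    obtain ⟨p, _, hp⟩ := Finset.exists_mem_eq_inf' hnep (fun p : Fin n × Fin n => (Q ^ K) p.1 p.2)
    rw [hεdef, hp]; exact hK p.1 p.2
  have hεle : ∀ i j, ε ≤ (Q ^ K) i j := fun i j =>
    Finset.inf'_le _ (Finset.mem_univ (i, j))
  have hε1 : ε ≤ 1 := by
    obtain ⟨i⟩ := ‹Nonempty (Fin n)›
    calc ε ≤ (Q ^ K) i i := hεle i i
    _ ≤ ∑ j, (Q ^ K) i j := Finset.single_le_sum (fun j _ => hQKnn i j) (Finset.mem_univ i)
    _ = 1 := hQKrow i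
  intro j
  -- the vector iteration
  set w : Fin n → ℝ := Pi.single j 1 with hw
  set u : ℕ → Fin n → ℝ := fun k => (Q ^ k) *ᵥ w with hu
  have husucc : ∀ k, u (k + 1) = Q *ᵥ u k := by
    intro k
    rw [hu]
    simp only
    rw [Matrix.mulVec_mulVec, ← pow_succ']
  have huK : ∀ k, u (k + K) = (Q ^ K) *ᵥ u k := by
    intro k
    rw [hu]
    simp only
    rw [Matrix.mulVec_mulVec, ← pow_add, Nat.add_comm]
  set m : ℕ → ℝ := fun k => Finset.univ.inf' hne (u k) with hmdef
  set M : ℕ → ℝ := fun k => Finset.univ.sup' hne (u k) with hMdef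
  have hmM : ∀ k, m k ≤ M k := fun k => inf'_le_sup'_univ hne (u k)
  have hmmono : Monotone m := by
    refine monotone_nat_of_le_succ fun k => ?_
    rw [hmdef]
    refine Finset.le_inf' hne _ fun i _ => ?_
    rw [husucc k]
    exact (mulVec_bounds hne Q hnn hrow (u k) i).1
  have hManti : Antitone M := by
    refine antitone_nat_of_succ_le fun k => ?_
    rw [hMdef]
    refine Finset.sup'_le hne _ fun i _ => ?_
    rw [husucc k]
    exact (mulVec_bounds hne Q hnn hrow (u k) i).2
  have hcontr : ∀ k, M (k + K) - m (k + K) ≤ (1 - ε) * (M k - m k) := by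
    intro k
    have h1 : M (k + K) ≤ m k + (1 - ε) * (M k - m k) := by
      refine Finset.sup'_le hne _ fun i _ => ?_
      rw [huK k]
      exact mulVec_contract hne (Q ^ K) ε hQKnn hQKrow hεle (u k) i
    have h2 : m k ≤ m (k + K) := hmmono (Nat.le_add_right k K)
    linarith
  set osc : ℕ → ℝ := fun k => M k - m k with hoscdef
  have hoscnn : ∀ k, 0 ≤ osc k := fun k => sub_nonneg.2 (hmM k)
  have hoscanti : Antitone osc := fun a b hab => by
    have := hmmono hab
    have := hManti hab
    simp only [hoscdef]
    linarith
  have hr0 : 0 ≤ 1 - ε := by linarith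
  have hr1 : 1 - ε < 1 := by linarith
  have hgeo : ∀ i : ℕ, osc (i * K) ≤ (1 - ε) ^ i * osc 0 := by
    intro i
    induction i with
    | zero => simp
    | succ i ih =>
        have : (i + 1) * K = i * K + K := by ring
        rw [this, pow_succ]
        calc osc (i * K + K) ≤ (1 - ε) * osc (i * K) := hcontr (i * K)
        _ ≤ (1 - ε) * ((1 - ε) ^ i * osc 0) := mul_le_mul_of_nonneg_left ih hr0
        _ = (1 - ε) ^ i * (1 - ε) * osc 0 := by ring
  have hdivtop : Tendsto (fun k : ℕ => k / K) atTop atTop := by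
    refine tendsto_atTop_atTop.2 fun b => ⟨b * K, fun k hk => ?_⟩
    exact (Nat.le_div_iff_mul_le hKpos).2 hk
  have hosc0 : Tendsto osc atTop (nhds 0) := by
    have hgt : Tendsto (fun k : ℕ => (1 - ε) ^ (k / K) * osc 0) atTop (nhds 0) := by
      have := ((tendsto_pow_atTop_nhds_zero_of_lt_one hr0 hr1).comp hdivtop).mul_const (osc 0)
      simpa using this
    refine squeeze_zero hoscnn (fun k => ?_) hgt
    calc osc k ≤ osc (k / K * K) := hoscanti (Nat.div_mul_le_self k K)
    _ ≤ (1 - ε) ^ (k / K) * osc 0 := hgeo (k / K)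
  -- m converges
  have hbdd : BddAbove (Set.range m) := by
    refine ⟨M 0, fun a ⟨k, hk⟩ => ?_⟩
    rw [← hk]
    exact le_trans (hmM k) (hManti (Nat.zero_le k))
  have hmconv : Tendsto m atTop (nhds (⨆ k, m k)) := tendsto_atTop_ciSup hmmono hbdd
  set L : ℝ := ⨆ k, m k with hLdef
  have hMconv : Tendsto M atTop (nhds L) := by
    have : Tendsto (fun k => m k + osc k) atTop (nhds (L + 0)) := hmconv.add hosc0
    simpa [hoscdef] using this
  refine ⟨L, ?_, ?_⟩
  · -- positivity: L ≥ m K ≥ ε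
    have hmK : ε ≤ m K := by
      refine Finset.le_inf' hne _ fun i _ => ?_
      have : u K i = (Q ^ K) i j := by
        simp only [hu, hw, Matrix.mulVec, dotProduct]
        rw [Finset.sum_eq_single j]
        · simp
        · intro l _ hl; simp [Pi.single_eq_of_ne hl]
        · intro h; exact absurd (Finset.mem_univ j) h
      rw [this]
      exact hεle i j
    have : m K ≤ L := le_ciSup hbdd K
    linarith
  · intro i
    have hval : ∀ k, (Q ^ k) i j = u k i := by
      intro k
      simp only [hu, hw, Matrix.mulVec, dotProduct]
      rw [Finset.sum_eq_single j]
      · simp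
      · intro l _ hl; simp [Pi.single_eq_of_ne hl]
      · intro h; exact absurd (Finset.mem_univ j) h
    simp only [hval]
    refine tendsto_of_tendsto_of_tendsto_of_le_of_le hmconv hMconv ?_ ?_
    · exact fun k => Finset.inf'_le _ (Finset.mem_univ i)
    · exact fun k => Finset.le_sup' _ (Finset.mem_univ i)

/-- Ratio Consensus, Proposition 1: on a strongly connected digraph,
with `y[0] = S`, `x[0] = 𝟏`, `y[k+1] = P y[k]`, `x[k+1] = P x[k]`, each `x_j[k] > 0`
and the ratio `y_j[k] / x_j[k]` converges to the average `(∑ i, S i) / n`. -/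
theorem stmt2 (n : ℕ) (hn : 0 < n) (E : Fin n → Fin n → Prop) [DecidableRel E]
    (hirr : ∀ j, ¬ E j j)
    (hSC : ∀ i j : Fin n, i ≠ j → Relation.TransGen E i j)
    (d : Fin n → ℕ) (hd : ∀ j, d j = (Finset.univ.filter fun l => E l j).card)
    (P : Matrix (Fin n) (Fin n) ℝ)
    (hP : ∀ l j, P l j = if l = j ∨ E l j then (1 + (d j : ℝ))⁻¹ else 0)
    (S : Fin n → ℝ) (y x : ℕ → Fin n → ℝ)
    (hy0 : y 0 = S) (hx0 : x 0 = fun _ => 1)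
    (hy : ∀ k, y (k + 1) = P.mulVec (y k))
    (hx : ∀ k, x (k + 1) = P.mulVec (x k)) :
    (∀ k j, 0 < x k j) ∧
    ∀ j, Filter.Tendsto (fun k => y k j / x k j) Filter.atTop
      (nhds ((∑ i, S i) / (n : ℝ))) := by
  have hne : Nonempty (Fin n) := ⟨⟨0, hn⟩⟩
  have hdpos : ∀ j : Fin n, (0 : ℝ) < 1 + (d j : ℝ) := fun j => by positivity
  have hPnn : ∀ l j, 0 ≤ P l j := by
    intro l j
    rw [hP]
    split
    · exact inv_nonneg.2 (le_of_lt (hdpos j))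
    · exact le_refl 0
  have hPdiag : ∀ j, 0 < P j j := by
    intro j
    rw [hP, if_pos (Or.inl rfl)]
    exact inv_pos.2 (hdpos j)
  have hcol : ∀ j, ∑ l, P l j = 1 := by
    intro j
    have hfe : (Finset.univ.filter fun l => l = j ∨ E l j)
        = insert j (Finset.univ.filter fun l => E l j) := by
      ext l
      simp [Finset.mem_filter, Finset.mem_insert]
    have hcard : (Finset.univ.filter fun l => l = j ∨ E l j).card = d j + 1 := by
      rw [hfe, Finset.card_insert_of_notMem (by simp [hirr j]), hd j]
    calc ∑ l, P l j = ∑ l, if l = j ∨ E l j then (1 + (d j : ℝ))⁻¹ else 0 := by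
          exact Finset.sum_congr rfl fun l _ => hP l j
    _ = ∑ l ∈ Finset.univ.filter (fun l => l = j ∨ E l j), (1 + (d j : ℝ))⁻¹ :=
          (Finset.sum_filter _ _).symm
    _ = ((d j + 1 : ℕ) : ℝ) * (1 + (d j : ℝ))⁻¹ := by
          rw [Finset.sum_const, hcard, nsmul_eq_mul]
    _ = 1 := by
          have h0 := (hdpos j).ne'
          push_cast
          field_simp
          ring
  set Q : Matrix (Fin n) (Fin n) ℝ := Pᵀ with hQ
  have hQapp : ∀ a b, Q a b = P b a := fun a b => rfl
  have hQnn : ∀ i j, 0 ≤ Q i j := fun i j => hPnn j i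
  have hQrow : ∀ i, ∑ j, Q i j = 1 := by
    intro i
    simpa [hQapp] using hcol i
  have hQdiag : ∀ i, 0 < Q i i := fun i => hPdiag i
  have hconn : ∀ i j : Fin n, ∃ k, 0 < (Q ^ k) i j := by
    intro i j
    by_cases hij : i = j
    · subst hij
      exact ⟨0, by simp [Matrix.one_apply_eq]⟩
    · have ht : Relation.TransGen (fun a b => 0 < Q a b) i j := by
        refine Relation.TransGen.mono ?_ i j ((hSC j i (Ne.symm hij)).swap)
        intro a b hab
        rw [hQapp, hP, if_pos (Or.inr hab)]
        exact inv_pos.2 (hdpos a)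
      clear hij
      induction ht with
      | single h => exact ⟨1, by simpa [pow_one] using h⟩
      | @tail b c _ hbc ih =>
          obtain ⟨k, hk⟩ := ih
          refine ⟨k + 1, ?_⟩
          rw [pow_succ, Matrix.mul_apply]
          exact Finset.sum_pos'
            (fun l _ => mul_nonneg (pow_entry_nonneg Q hQnn k i l) (hQnn l c))
            ⟨b, Finset.mem_univ b, mul_pos hk hbc⟩
  choose π hπpos hπtend using key_conv hn Q hQnn hQrow hQdiag hconn
  have hQPk : ∀ (k : ℕ) (i j : Fin n), (Q ^ k) i j = (P ^ k) j i := by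
    intro k i j
    rw [hQ, ← Matrix.transpose_pow, Matrix.transpose_apply]
  have hyk : ∀ k, y k = (P ^ k) *ᵥ S := by
    intro k
    induction k with
    | zero => simp [hy0, Matrix.one_mulVec]
    | succ k ih => rw [hy k, ih, Matrix.mulVec_mulVec, ← pow_succ']
  have hxk : ∀ k, x k = (P ^ k) *ᵥ (fun _ => 1) := by
    intro k
    induction k with
    | zero => simp [hx0, Matrix.one_mulVec]
    | succ k ih => rw [hx k, ih, Matrix.mulVec_mulVec, ← pow_succ']
  have hxpos : ∀ k j, 0 < x k j := by
    intro k
    induction k with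
    | zero => intro j; rw [hx0]; norm_num
    | succ k ih =>
        intro j
        rw [hx k]
        show 0 < ∑ l, P j l * x k l
        exact Finset.sum_pos'
          (fun l _ => mul_nonneg (hPnn j l) (ih l).le)
          ⟨j, Finset.mem_univ j, mul_pos (hPdiag j) (ih j)⟩
  refine ⟨hxpos, fun j => ?_⟩
  have hysum : ∀ k, y k j = ∑ i, (Q ^ k) i j * S i := by
    intro k
    rw [hyk k]
    show ∑ i, (P ^ k) j i * S i = _
    exact Finset.sum_congr rfl fun i _ => by rw [hQPk k i j]
  have hxsum : ∀ k, x k j = ∑ i, (Q ^ k) i j := by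
    intro k
    rw [hxk k]
    show ∑ i, (P ^ k) j i * 1 = _
    simp only [mul_one]
    exact Finset.sum_congr rfl fun i _ => by rw [hQPk k i j]
  have hyt : Tendsto (fun k => y k j) atTop (nhds (π j * ∑ i, S i)) := by
    have h1 : Tendsto (fun k => ∑ i, (Q ^ k) i j * S i) atTop (nhds (∑ i, π j * S i)) :=
      tendsto_finset_sum _ fun i _ => (hπtend j i).mul_const (S i)
    rw [← Finset.mul_sum] at h1
    have h2 : (fun k => y k j) = fun k => ∑ i, (Q ^ k) i j * S i := funext hysum
    rw [h2]
    exact h1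
  have hxt : Tendsto (fun k => x k j) atTop (nhds ((n : ℝ) * π j)) := by
    have h1 : Tendsto (fun k => ∑ i, (Q ^ k) i j) atTop (nhds (∑ _i : Fin n, π j)) :=
      tendsto_finset_sum _ fun i _ => hπtend j i
    rw [Finset.sum_const, Finset.card_univ, Fintype.card_fin, nsmul_eq_mul] at h1
    have h2 : (fun k => x k j) = fun k => ∑ i, (Q ^ k) i j := funext hxsum
    rw [h2]
    exact h1
  have hnpos : (0 : ℝ) < n := by exact_mod_cast hn
  have hxne : (n : ℝ) * π j ≠ 0 := ne_of_gt (mul_pos hnpos (hπpos j))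
  have hdiv := hyt.div hxt hxne
  have hlim : π j * (∑ i, S i) / ((n : ℝ) * π j) = (∑ i, S i) / (n : ℝ) := by
    have hπne := (hπpos j).ne'
    have hnne := hnpos.ne'
    field_simp
  rwa [hlim] at hdiv
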